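/- Let λ > 0, let s ≥ 1 be an integer, let c > 0 be real, and let η ∈ ℂ with |η| < 1. Define the harmonic polynomial p_1(z) = z + conj(η · Σ_{n=0}^s C(s,n) · ((s−n+1)_n/(c)_n) · z^{n+2}/(n+1)), where C(s,n) is the binomial coefficient and (x)_m the Pochhammer symbol. If Γ(c)·Γ(c+2s) < λ·(Γ(c+s))², then p_1 belongs to Ω_H^0(λ). -/

import Mathlib

open Complex

noncomputable section

/-- The open unit disk in the complex plane. -/
def unitDisk : Set ℂ := {z : ℂ | ‖z‖ < 1}

/-- The class `Ω_H^0(λ)` of harmonic mappings `f = h + conj ∘ g`. -/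
def OmegaH0 (lam : ℝ) (h g : ℂ → ℂ) : Prop :=
  AnalyticOnNhd ℂ h unitDisk ∧ AnalyticOnNhd ℂ g unitDisk ∧
    h 0 = 0 ∧ deriv h 0 = 1 ∧ g 0 = 0 ∧ deriv g 0 = 0 ∧
    ∀ z ∈ unitDisk,
      ‖h z - z * deriv h z‖ < lam - ‖g z - z * deriv g z‖

/-- The Pochhammer symbol \`(x)_n = x (x+1) ⋯ (x+n-1)\`. -/
def poch (x : ℝ) (n : ℕ) : ℝ := ∏ k ∈ Finset.range n, (x + k)

lemma poch_pos {x : ℝ} (hx : 0 < x) (n : ℕ) : 0 < poch x n :=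
  Finset.prod_pos fun k _ => by positivity

lemma poch_add (x : ℝ) (a b : ℕ) : poch x (a + b) = poch x a * poch (x + a) b := by
  unfold poch
  rw [Finset.prod_range_add]
  congr 1
  refine Finset.prod_congr rfl fun k _ => ?_
  push_cast; ring

lemma desc_eval (x : ℝ) (n : ℕ) :
    (descPochhammer ℝ n).eval x = ∏ k ∈ Finset.range n, (x - k) := by
  induction n with
  | zero => simp [descPochhammer]
  | succ n ih => rw [descPochhammer_succ_right, Finset.prod_range_succ, ← ih]; simp

lemma poch_eq_desc (x : ℝ) (n : ℕ) :
    poch x n = (descPochhammer ℝ n).eval (x + n - 1) := by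
  rw [desc_eval]
  unfold poch
  rw [← Finset.prod_range_reflect]
  refine Finset.prod_congr rfl fun k hk => ?_
  have hk' : k < n := Finset.mem_range.mp hk
  have : ((n - 1 - k : ℕ) : ℝ) = (n : ℝ) - 1 - k := by
    have : n - 1 - k = n - (1 + k) := by omega
    rw [this, Nat.cast_sub (by omega)]
    push_cast; ring
  rw [this]; ring

lemma smeval_desc (n : ℕ) (r : ℝ) :
    (descPochhammer ℤ n).smeval r = (descPochhammer ℝ n).eval r := by
  induction n with
  | zero => simp [descPochhammer, Polynomial.smeval_one]
  | succ n ih =>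
    rw [descPochhammer_succ_right, descPochhammer_succ_right, Polynomial.smeval_mul,
      Polynomial.smeval_sub, Polynomial.smeval_X, Polynomial.smeval_natCast, ih]
    simp

lemma vand (x y : ℝ) (k : ℕ) :
    (descPochhammer ℝ k).eval (x + y) = ∑ n ∈ Finset.range (k + 1),
      (k.choose n : ℝ) * ((descPochhammer ℝ n).eval x * (descPochhammer ℝ (k - n)).eval y) := by
  have h := Ring.descPochhammer_smeval_add (R := ℝ) (r := x) (s := y) k (Commute.all x y)
  rw [smeval_desc] at h
  rw [h, Finset.Nat.sum_antidiagonal_eq_sum_range_succ_mk]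
  refine Finset.sum_congr rfl fun n _ => ?_
  rw [smeval_desc, smeval_desc]

lemma key_ident (s : ℕ) (c : ℝ) :
    ∑ n ∈ Finset.range (s + 1),
      (s.choose n : ℝ) * (poch ((s : ℝ) - n + 1) n * poch (c + n) (s - n)) = poch (c + s) s := by
  have h1 : c + (s : ℝ) + s - 1 = (s : ℝ) + (c + s - 1) := by ring
  rw [poch_eq_desc, h1, vand]
  refine Finset.sum_congr rfl fun n hn => ?_
  have hns : n ≤ s := Finset.mem_range_succ_iff.mp hn
  rw [poch_eq_desc ((s : ℝ) - n + 1) n, poch_eq_desc (c + n) (s - n)]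
  have e1 : (s : ℝ) - n + 1 + n - 1 = (s : ℝ) := by ring
  have e2 : c + (n : ℝ) + ((s - n : ℕ) : ℝ) - 1 = c + s - 1 := by
    rw [Nat.cast_sub hns]; ring
  rw [e1, e2]

lemma sum_eq (s : ℕ) {c : ℝ} (hc : 0 < c) :
    ∑ n ∈ Finset.range (s + 1), (s.choose n : ℝ) * poch ((s : ℝ) - n + 1) n / poch c n
      = poch (c + s) s / poch c s := by
  rw [eq_div_iff (poch_pos hc s).ne', Finset.sum_mul, ← key_ident s c]
  refine Finset.sum_congr rfl fun n hn => ?_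
  have hns : n ≤ s := Finset.mem_range_succ_iff.mp hn
  have hsplit : poch c s = poch c n * poch (c + n) (s - n) := by
    rw [← poch_add]; congr 1; omega
  rw [hsplit]
  field_simp [(poch_pos hc n).ne']

lemma gamma_poch (x : ℝ) (hx : 0 < x) (n : ℕ) :
    Real.Gamma (x + n) = poch x n * Real.Gamma x := by
  induction n with
  | zero => simp [poch]
  | succ n ih =>
    have hne : x + n ≠ 0 := by positivity
    have h : x + ((n : ℝ) + 1) = (x + n) + 1 := by ring
    rw [Nat.cast_succ, h, Real.Gamma_add_one hne, ih, poch_add x n 1]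
    simp [poch]
    ring

lemma gHasDeriv (η : ℂ) (a : ℕ → ℝ) (s : ℕ) (z : ℂ) :
    HasDerivAt (fun z : ℂ => η * ∑ n ∈ Finset.range (s + 1),
        ((a n : ℝ) : ℂ) * z ^ (n + 2) / ((n : ℂ) + 1))
      (η * ∑ n ∈ Finset.range (s + 1),
        ((a n : ℝ) : ℂ) * (((n : ℂ) + 2) * z ^ (n + 1)) / ((n : ℂ) + 1)) z := by
  refine HasDerivAt.const_mul η (HasDerivAt.fun_sum fun n _ => ?_)
  have h := ((hasDerivAt_pow (n + 2) z).const_mul ((a n : ℝ) : ℂ)).div_const ((n : ℂ) + 1)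
  convert h using 2
  · rfl
  push_cast
  ring

theorem stmt17 (lam : ℝ) (hlam : 0 < lam) (s : ℕ) (hs : 1 ≤ s) (c : ℝ) (hc : 0 < c)
    (η : ℂ) (hη : ‖η‖ < 1)
    (hcond : Real.Gamma c * Real.Gamma (c + 2 * s) < lam * Real.Gamma (c + s) ^ 2) :
    OmegaH0 lam (fun z => z)
      (fun z => η * ∑ n ∈ Finset.range (s + 1),
        (((s.choose n : ℝ) * poch ((s : ℝ) - n + 1) n / poch c n : ℝ) : ℂ) *
          z ^ (n + 2) / ((n : ℂ) + 1)) := by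
  have hopen : IsOpen unitDisk := isOpen_lt continuous_norm continuous_const
  have hderiv : ∀ z : ℂ, HasDerivAt (fun z : ℂ => η * ∑ n ∈ Finset.range (s + 1),
      (((s.choose n : ℝ) * poch ((s : ℝ) - n + 1) n / poch c n : ℝ) : ℂ) *
        z ^ (n + 2) / ((n : ℂ) + 1))
      (η * ∑ n ∈ Finset.range (s + 1),
      (((s.choose n : ℝ) * poch ((s : ℝ) - n + 1) n / poch c n : ℝ) : ℂ) *
        (((n : ℂ) + 2) * z ^ (n + 1)) / ((n : ℂ) + 1)) z :=
    fun z => gHasDeriv η (fun n => (s.choose n : ℝ) * poch ((s : ℝ) - n + 1) n / poch c n) s z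
  have hanonneg : ∀ n, n ≤ s →
      0 ≤ (s.choose n : ℝ) * poch ((s : ℝ) - n + 1) n / poch c n := by
    intro n hn
    have h1 : (0 : ℝ) < poch ((s : ℝ) - n + 1) n := by
      refine poch_pos ?_ n
      have : (n : ℝ) ≤ s := by exact_mod_cast hn
      linarith
    have h2 := poch_pos hc n
    positivity
  have hT : ∑ n ∈ Finset.range (s + 1),
      (s.choose n : ℝ) * poch ((s : ℝ) - n + 1) n / poch c n < lam := by
    rw [sum_eq s hc]
    have hgam2 : Real.Gamma (c + 2 * s) = poch c (2 * s) * Real.Gamma c := by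
      have h := gamma_poch c hc (2 * s)
      rw [← h]; congr 1; push_cast; ring
    have hgam1 : Real.Gamma (c + s) = poch c s * Real.Gamma c := gamma_poch c hc s
    have hΓpos := Real.Gamma_pos_of_pos hc
    rw [hgam2, hgam1] at hcond
    have hg2 : (0 : ℝ) < Real.Gamma c ^ 2 := by positivity
    have h4 : poch c (2 * s) * Real.Gamma c ^ 2 < (lam * poch c s ^ 2) * Real.Gamma c ^ 2 := by
      linear_combination hcond
    have h3 : poch c (2 * s) < lam * (poch c s) ^ 2 := lt_of_mul_lt_mul_right h4 hg2.le
    have h2 : poch c (2 * s) = poch c s * poch (c + s) s := by rw [two_mul, poch_add]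
    rw [h2] at h3
    have hps := poch_pos hc s
    rw [div_lt_iff₀ hps]
    nlinarith
  have hdiff : Differentiable ℂ (fun z : ℂ => η * ∑ n ∈ Finset.range (s + 1),
      (((s.choose n : ℝ) * poch ((s : ℝ) - n + 1) n / poch c n : ℝ) : ℂ) *
        z ^ (n + 2) / ((n : ℂ) + 1)) := fun z => (hderiv z).differentiableAt
  refine ⟨(differentiable_id.differentiableOn).analyticOnNhd hopen,
    (hdiff.differentiableOn).analyticOnNhd hopen, rfl, by simp, by simp, ?_, ?_⟩
  · rw [(hderiv 0).deriv]
    simp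
  · intro z hz
    have hz1 : ‖z‖ < 1 := hz
    rw [(hderiv z).deriv]
    have hfun : (η * ∑ n ∈ Finset.range (s + 1),
        (((s.choose n : ℝ) * poch ((s : ℝ) - n + 1) n / poch c n : ℝ) : ℂ) *
          z ^ (n + 2) / ((n : ℂ) + 1)) -
        z * (η * ∑ n ∈ Finset.range (s + 1),
        (((s.choose n : ℝ) * poch ((s : ℝ) - n + 1) n / poch c n : ℝ) : ℂ) *
          (((n : ℂ) + 2) * z ^ (n + 1)) / ((n : ℂ) + 1)) =
        η * ∑ n ∈ Finset.range (s + 1),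
          -((((s.choose n : ℝ) * poch ((s : ℝ) - n + 1) n / poch c n : ℝ) : ℂ) *
            z ^ (n + 2)) := by
      rw [show ∀ A B : ℂ, η * A - z * (η * B) = η * (A - z * B) from fun A B => by ring]
      congr 1
      rw [Finset.mul_sum, ← Finset.sum_sub_distrib]
      refine Finset.sum_congr rfl fun n _ => ?_
      have hne : (n : ℂ) + 1 ≠ 0 := Nat.cast_add_one_ne_zero n
      have hpc : ((poch c n : ℝ) : ℂ) ≠ 0 := by
        exact_mod_cast (poch_pos hc n).ne'
      field_simp
      ring
    rw [hfun]
    have hzz : z - z * deriv (fun w : ℂ => w) z = 0 := by simp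
    rw [hzz, norm_zero]
    refine sub_pos.mpr ?_
    have hWsum : ‖∑ n ∈ Finset.range (s + 1),
        -((((s.choose n : ℝ) * poch ((s : ℝ) - n + 1) n / poch c n : ℝ) : ℂ) * z ^ (n + 2))‖
        ≤ ∑ n ∈ Finset.range (s + 1),
          (s.choose n : ℝ) * poch ((s : ℝ) - n + 1) n / poch c n := by
      refine (norm_sum_le _ _).trans (Finset.sum_le_sum fun n hn => ?_)
      have hn' : n ≤ s := Finset.mem_range_succ_iff.mp hn
      rw [norm_neg, norm_mul, norm_pow, Complex.norm_real, Real.norm_eq_abs,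
        _root_.abs_of_nonneg (hanonneg n hn')]
      calc _ ≤ ((s.choose n : ℝ) * poch ((s : ℝ) - n + 1) n / poch c n) * 1 :=
            mul_le_mul_of_nonneg_left
              (pow_le_one₀ (norm_nonneg _) hz1.le) (hanonneg n hn')
        _ = _ := mul_one _
    calc ‖η * ∑ n ∈ Finset.range (s + 1),
          -((((s.choose n : ℝ) * poch ((s : ℝ) - n + 1) n / poch c n : ℝ) : ℂ) * z ^ (n + 2))‖
        = ‖η‖ * ‖∑ n ∈ Finset.range (s + 1),
          -((((s.choose n : ℝ) * poch ((s : ℝ) - n + 1) n / poch c n : ℝ) : ℂ) * z ^ (n + 2))‖ :=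
          norm_mul _ _
      _ ≤ 1 * (∑ n ∈ Finset.range (s + 1),
          (s.choose n : ℝ) * poch ((s : ℝ) - n + 1) n / poch c n) :=
          mul_le_mul hη.le hWsum (norm_nonneg _) zero_le_one
      _ = _ := one_mul _
      _ < lam := hT
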